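/- arXiv:2409.18540 — 7 statements merged into one kernel-verified Lean document; each statement's English description precedes it below -/
import Mathlib

section
/- Let p be a prime and j ≥ 1 an integer. For any finitely supported families (ε_i)_{i≥j} with ε_i ∈ {0,1} and (l_i)_{i≥j} with l_i ∈ ℕ, not all zero, set d = Σ_{i≥j} [(ε_i + l_i)(2^{i+1} − 2) + ε_i] and w = Σ_{i≥j} (ε_i + l_i)(2^i − 1) with l_j = 0 allowed. Then w > 0 and 2 ≤ d/w ≤ 2 + 1/(2^j − 1). -/
/-- Degree/weight ratio estimate for homogeneous monomials in
`π_{*,*}(𝒜(2)/τ)/⟨τ_0,…,τ_{j−1},ξ_1,…,ξ_j⟩`. -/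
theorem stmt0 (p : ℕ) (hp : p.Prime) (j : ℕ) (hj : 1 ≤ j)
    (ε l : ℕ → ℕ) (N : ℕ)
    (hε01 : ∀ i, ε i ≤ 1)
    (hsupp : ∀ i, N ≤ i → ε i = 0 ∧ l i = 0)
    (hlow : ∀ i, i < j → ε i = 0 ∧ l i = 0)
    (hlj : l j = 0)
    (hne : ∃ i, ε i ≠ 0 ∨ l i ≠ 0)
    (d w : ℕ)
    (hd : d = ∑ i ∈ Finset.range N, ((ε i + l i) * (2 ^ (i + 1) - 2) + ε i))
    (hw : w = ∑ i ∈ Finset.range N, (ε i + l i) * (2 ^ i - 1)) :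
    0 < w ∧ 2 ≤ (d : ℚ) / (w : ℚ) ∧ (d : ℚ) / (w : ℚ) ≤ 2 + 1 / ((2 : ℚ) ^ j - 1) := by
  set S := ∑ i ∈ Finset.range N, ε i with hS
  -- d = 2w + S
  have hd2 : d = 2 * w + S := by
    rw [hd, hw, hS, Finset.mul_sum, ← Finset.sum_add_distrib]
    apply Finset.sum_congr rfl
    intro i _
    have h1 : (1:ℕ) ≤ 2 ^ i := Nat.one_le_two_pow
    have h2 : 2 ^ (i + 1) - 2 = 2 * (2 ^ i - 1) := by
      have : 2 ^ (i + 1) = 2 * 2 ^ i := by ring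
      omega
    rw [h2, Nat.mul_left_comm]
  -- w positive
  obtain ⟨i, hi⟩ := hne
  have hji : j ≤ i := by
    by_contra h
    have := hlow i (by omega)
    omega
  have hiN : i < N := by
    by_contra h
    have := hsupp i (by omega)
    omega
  have h2i : 2 ≤ 2 ^ i := by
    calc 2 = 2 ^ 1 := rfl
    _ ≤ 2 ^ i := Nat.pow_le_pow_right (by norm_num) (by omega)
  have hwpos : 0 < w := by
    rw [hw]
    have : (ε i + l i) * (2 ^ i - 1) ≤ ∑ k ∈ Finset.range N, (ε k + l k) * (2 ^ k - 1) :=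
      Finset.single_le_sum (f := fun k => (ε k + l k) * (2 ^ k - 1))
        (fun k _ => Nat.zero_le _) (Finset.mem_range.mpr hiN)
    have h1 : 1 ≤ (ε i + l i) * (2 ^ i - 1) :=
      Nat.one_le_iff_ne_zero.mpr (by
        intro h
        rcases Nat.mul_eq_zero.mp h with h | h <;> omega)
    omega
  -- key: (2^j - 1) * S ≤ w
  have hkey : (2 ^ j - 1) * S ≤ w := by
    rw [hw, hS, Finset.mul_sum]
    apply Finset.sum_le_sum
    intro k _
    by_cases hk : k < j
    · have := hlow k hk
      simp [this.1]
    · push_neg at hk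
      calc (2 ^ j - 1) * ε k ≤ (2 ^ k - 1) * ε k := by
            apply Nat.mul_le_mul_right
            exact Nat.sub_le_sub_right (Nat.pow_le_pow_right (by norm_num) hk) 1
      _ ≤ (ε k + l k) * (2 ^ k - 1) := by
            rw [Nat.mul_comm]
            exact Nat.mul_le_mul_right _ (by omega)
  refine ⟨hwpos, ?_, ?_⟩
  · have hwQ : (0:ℚ) < (w:ℚ) := by exact_mod_cast hwpos
    rw [le_div_iff₀ hwQ]
    have : (d:ℚ) = 2 * w + S := by exact_mod_cast hd2
    have hSnn : (0:ℚ) ≤ (S:ℚ) := by positivity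
    linarith
  · have hwQ : (0:ℚ) < (w:ℚ) := by exact_mod_cast hwpos
    have h2j : (1:ℕ) ≤ 2 ^ j := Nat.one_le_two_pow
    have h2j2 : (2:ℕ) ≤ 2 ^ j := by
      calc 2 = 2 ^ 1 := rfl
      _ ≤ 2 ^ j := Nat.pow_le_pow_right (by norm_num) hj
    have hcast : ((2:ℚ) ^ j - 1) = ((2 ^ j - 1 : ℕ) : ℚ) := by
      push_cast [h2j]
      ring
    have hpow : (0:ℚ) < (2:ℚ) ^ j - 1 := by
      rw [hcast]
      exact_mod_cast Nat.lt_of_lt_of_le (by norm_num) (by omega : 1 ≤ 2 ^ j - 1)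
    rw [div_le_iff₀ hwQ]
    have hdQ : (d:ℚ) = 2 * w + S := by exact_mod_cast hd2
    have hkeyQ : ((2 ^ j - 1 : ℕ) : ℚ) * S ≤ (w:ℚ) := by exact_mod_cast hkey
    rw [← hcast] at hkeyQ
    have : (S:ℚ) ≤ w / ((2:ℚ) ^ j - 1) := by
      rw [le_div_iff₀ hpow]
      linarith
    have h1 : (1:ℚ) / ((2:ℚ)^j - 1) * w = w / ((2:ℚ)^j - 1) := by ring
    nlinarith [this, hwQ]
end

section
/- Let p be an odd prime. Let a be an integer with −(p−2) ≤ a ≤ 0, let i_1 < i_2 < … < i_n be positive integers, and let b_t ∈ {0,1}, c_t ∈ ℕ for 1 ≤ t ≤ n with b_1 ≠ 0 or c_1 ≠ 0. Set d = Σ_t [2(b_t + c_t)(p^{i_t} − 1) + b_t] and w = a + Σ_t (b_t + c_t)(p^{i_t} − 1). Then d > 0 and Q(i_1) ≤ w/d ≤ 1/2, where Q(i) = 1/2 − (p−2)/(2p^i − 2) − 1/(4p^i − 2). -/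
/-- Degree/weight estimate for monomials in the mod-p dual motivic Steenrod algebra
`π_{*,*}(𝒜(p)/τ^{p−1})`. -/
theorem stmt2 (p : ℕ) (hp : p.Prime) (hodd : Odd p)
    (a : ℤ) (ha1 : -((p : ℤ) - 2) ≤ a) (ha2 : a ≤ 0)
    (n : ℕ) (hn : 0 < n)
    (idx : Fin n → ℕ) (hmono : StrictMono idx) (hpos : ∀ t, 1 ≤ idx t)
    (b c : Fin n → ℕ) (hb : ∀ t, b t ≤ 1)
    (hfirst : b ⟨0, hn⟩ ≠ 0 ∨ c ⟨0, hn⟩ ≠ 0)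
    (d w : ℚ)
    (hd : d = ∑ t, (2 * ((b t : ℚ) + (c t : ℚ)) * ((p : ℚ) ^ (idx t) - 1) + (b t : ℚ)))
    (hw : w = (a : ℚ) + ∑ t, ((b t : ℚ) + (c t : ℚ)) * ((p : ℚ) ^ (idx t) - 1)) :
    0 < d ∧
      (1 / 2 - ((p : ℚ) - 2) / (2 * (p : ℚ) ^ (idx ⟨0, hn⟩) - 2)
          - 1 / (4 * (p : ℚ) ^ (idx ⟨0, hn⟩) - 2)) ≤ w / d ∧
      w / d ≤ 1 / 2 := by
  have hp3 : 3 ≤ p := by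
    have h2 := hp.two_le
    rcases Nat.odd_iff.mp hodd with h
    omega
  have hp3' : (3 : ℚ) ≤ (p : ℚ) := by exact_mod_cast hp3
  set t0 : Fin n := ⟨0, hn⟩ with ht0
  set m : ℚ := (p : ℚ) ^ (idx t0) with hm_def
  have hpm : (p : ℚ) ≤ m := by
    have h1 : (1 : ℚ) ≤ (p : ℚ) := by linarith
    calc (p : ℚ) = (p : ℚ) ^ 1 := (pow_one _).symm
      _ ≤ (p : ℚ) ^ (idx t0) := pow_le_pow_right₀ h1 (hpos t0)
  have hm3 : (3 : ℚ) ≤ m := le_trans hp3' hpm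
  set S : ℚ := ∑ t, ((b t : ℚ) + (c t : ℚ)) * ((p : ℚ) ^ (idx t) - 1) with hS_def
  set B : ℚ := ∑ t, (b t : ℚ) with hB_def
  -- each index is at least idx t0, so p^(idx t) ≥ m
  have hmle : ∀ t : Fin n, m ≤ (p : ℚ) ^ (idx t) := by
    intro t
    have h1 : (1 : ℚ) ≤ (p : ℚ) := by linarith
    have ht : t0 ≤ t := by rw [Fin.le_def]; exact Nat.zero_le _
    exact pow_le_pow_right₀ h1 (hmono.monotone ht)
  have hterm_nonneg : ∀ t : Fin n, (0 : ℚ) ≤ ((b t : ℚ) + (c t : ℚ)) * ((p : ℚ) ^ (idx t) - 1) := by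
    intro t
    apply mul_nonneg
    · positivity
    · have := hmle t; linarith
  -- S ≥ m - 1
  have hbc0 : (1 : ℚ) ≤ (b t0 : ℚ) + (c t0 : ℚ) := by
    have : 1 ≤ b t0 + c t0 := by rcases hfirst with h | h <;> omega
    exact_mod_cast this
  have hS1 : m - 1 ≤ S := by
    have h0 : ((b t0 : ℚ) + (c t0 : ℚ)) * ((p : ℚ) ^ (idx t0) - 1) ≤ S :=
      Finset.single_le_sum (fun t _ => hterm_nonneg t) (Finset.mem_univ t0)
    have : m - 1 ≤ ((b t0 : ℚ) + (c t0 : ℚ)) * ((p : ℚ) ^ (idx t0) - 1) := by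
      rw [← hm_def]
      nlinarith [hbc0, hm3]
    linarith
  -- S ≥ B * (m - 1)
  have hS2 : B * (m - 1) ≤ S := by
    rw [hB_def, Finset.sum_mul]
    apply Finset.sum_le_sum
    intro t _
    have h1 : (0 : ℚ) ≤ (c t : ℚ) := by positivity
    have h2 : (0 : ℚ) ≤ (b t : ℚ) := by positivity
    have h3 := hmle t
    nlinarith
  have hB0 : (0 : ℚ) ≤ B := Finset.sum_nonneg fun t _ => by positivity
  -- d = 2 S + B
  have hdSB : d = 2 * S + B := by
    rw [hd, hS_def, hB_def, Finset.mul_sum, ← Finset.sum_add_distrib]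
    exact Finset.sum_congr rfl fun t _ => by ring
  have hwS : w = (a : ℚ) + S := hw
  have haQ1 : -((p : ℚ) - 2) ≤ (a : ℚ) := by exact_mod_cast ha1
  have haQ2 : (a : ℚ) ≤ 0 := by exact_mod_cast ha2
  have hdpos : 0 < d := by rw [hdSB]; linarith
  refine ⟨hdpos, ?_, ?_⟩
  · -- lower bound
    have hden1 : (0 : ℚ) < 2 * m - 2 := by linarith
    have hden2 : (0 : ℚ) < 4 * m - 2 := by linarith
    set e1 : ℚ := ((p : ℚ) - 2) / (2 * m - 2) with he1_def
    set e2 : ℚ := 1 / (4 * m - 2) with he2_def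
    have he1 : e1 * (2 * m - 2) = (p : ℚ) - 2 := div_mul_cancel₀ _ (ne_of_gt hden1)
    have he2 : e2 * (4 * m - 2) = 1 := div_mul_cancel₀ _ (ne_of_gt hden2)
    have he1n : 0 ≤ e1 := div_nonneg (by linarith) (le_of_lt hden1)
    have he2n : 0 ≤ e2 := div_nonneg (by norm_num) (le_of_lt hden2)
    have key1 : (p : ℚ) - 2 ≤ e1 * (2 * S + B) := by
      have h : e1 * (2 * m - 2) ≤ e1 * (2 * S + B) := by
        apply mul_le_mul_of_nonneg_left _ he1n
        linarith
      linarith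
    have key2 : B / 2 ≤ e2 * (2 * S + B) := by
      have h : e2 * ((4 * m - 2) * (B / 2)) ≤ e2 * (2 * S + B) := by
        apply mul_le_mul_of_nonneg_left _ he2n
        nlinarith
      have h2 : e2 * ((4 * m - 2) * (B / 2)) = B / 2 := by
        rw [show e2 * ((4 * m - 2) * (B / 2)) = (e2 * (4 * m - 2)) * (B / 2) by ring, he2,
          one_mul]
      linarith
    rw [le_div_iff₀ hdpos, hdSB, hwS]
    nlinarith [key1, key2, haQ1]
  · rw [div_le_iff₀ hdpos, hdSB, hwS]
    linarith
end

section
/- Let p be an odd prime and j ≥ 0, k ≥ 1 integers. There do not exist a positive integer n and natural numbers m_1, …, m_n and w_1, …, w_n satisfying: Σ_h m_h = 2p^{j+k}, Σ_h w_h = p^k(p^j − 1), m_h ≥ 2p^{j+1} − 1 for all h, w_h ≥ p^{j+1} − p + 1 for all h, and (2p^{j+1} − 2p + 1)(m_h − 1) ≤ (4p^{j+1} − 4) w_h for all h. -/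
lemma key4 (p P q n : ℤ) (hp : 3 ≤ p) (hP : p ≤ P) (hq : 1 ≤ q) (hn : 1 ≤ n)
    (h1 : n * (2 * P - 1) ≤ 2 * q * P)
    (h2 : (2 * P - 2 * p + 1) * (2 * q * P - n) ≤ (4 * P - 4) * (q * P - q * p)) :
    False := by
  nlinarith [mul_le_mul_of_nonneg_right h2 (show (0:ℤ) ≤ 2 * P - 1 by linarith),
    mul_le_mul_of_nonneg_left h1 (show (0:ℤ) ≤ 2 * P - 2 * p + 1 by linarith),
    mul_pos (mul_pos (show (0:ℤ) < q by linarith) (show (0:ℤ) < P - 1 by linarith))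
      (show (0:ℤ) < 2 * P - p by linarith)]

/-- Arithmetic impossibility showing `(γ_{p^{k−1}}(μ_j))^p` supports no nontrivial
differential in the motivic Greenlees spectral sequence for `MHH(MZ/p)/τ^{p−1}`. -/
theorem stmt4 (p j k : ℕ) (hp : p.Prime) (hodd : Odd p) (hk : 1 ≤ k) :
    ¬ ∃ (n : ℕ) (_ : 1 ≤ n) (m w : Fin n → ℕ),
      (∑ h, m h = 2 * p ^ (j + k)) ∧
      (∑ h, w h = p ^ k * (p ^ j - 1)) ∧
      (∀ h, 2 * p ^ (j + 1) - 1 ≤ m h) ∧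
      (∀ h, p ^ (j + 1) - p + 1 ≤ w h) ∧
      (∀ h, (2 * p ^ (j + 1) - 2 * p + 1) * (m h - 1) ≤ (4 * p ^ (j + 1) - 4) * w h) := by
  rintro ⟨n, hn, m, w, hm, hw, hmlb, hwlb, hineq⟩
  have hp3 : 3 ≤ p := by
    have h2 := hp.two_le
    have hne : p ≠ 2 := fun h => by simp [h, Nat.odd_iff] at hodd
    omega
  have hP : p ≤ p ^ (j + 1) := by
    calc p = p ^ 1 := (pow_one p).symm
    _ ≤ p ^ (j + 1) := Nat.pow_le_pow_right (by omega) (by omega)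
  -- I1 : n * (2P - 1) ≤ ∑ m
  have I1 : n * (2 * p ^ (j + 1) - 1) ≤ 2 * p ^ (j + k) := by
    rw [← hm]
    calc n * (2 * p ^ (j + 1) - 1) = ∑ _h : Fin n, (2 * p ^ (j + 1) - 1) := by
          simp [Finset.sum_const, mul_comm]
    _ ≤ ∑ h, m h := Finset.sum_le_sum fun h _ => hmlb h
  -- ∑ (m h - 1) = ∑ m - n
  have hsub : ∑ h, (m h - 1) + n = 2 * p ^ (j + k) := by
    rw [← hm]
    calc ∑ h, (m h - 1) + n = ∑ h, (m h - 1 + 1) := by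
          rw [Finset.sum_add_distrib]; simp
    _ = ∑ h, m h := Finset.sum_congr rfl fun h _ => by
          have := hmlb h; omega
  have I2 : (2 * p ^ (j + 1) - 2 * p + 1) * (2 * p ^ (j + k) - n) ≤
      (4 * p ^ (j + 1) - 4) * (p ^ k * (p ^ j - 1)) := by
    rw [← hw, ← hsub, Nat.add_sub_cancel, Finset.mul_sum, Finset.mul_sum]
    exact Finset.sum_le_sum fun h _ => hineq h
  -- pass to integers
  have hnle : n ≤ 2 * p ^ (j + k) := by
    have : (1:ℕ) ≤ 2 * p ^ (j + 1) - 1 := by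
      have : 3 ≤ p ^ (j + 1) := le_trans hp3 hP
      omega
    nlinarith [I1]
  have hpj : 1 ≤ p ^ j := Nat.one_le_pow _ _ (by omega)
  zify [hP, hpj, hnle, show 1 ≤ 2 * p ^ (j+1) by omega,
    show 2 * p ≤ 2 * p ^ (j+1) by omega,
    show 4 ≤ 4 * p ^ (j+1) by nlinarith] at I1 I2
  have hjk : j + k = (k - 1) + (j + 1) := by omega
  have e1 : ((p:ℤ)) ^ (j + k) = (p:ℤ) ^ (k-1) * (p:ℤ) ^ (j+1) := by
    rw [hjk, pow_add]
  have e2 : ((p:ℤ)) ^ k * ((p:ℤ) ^ j - 1) =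
      (p:ℤ) ^ (k-1) * (p:ℤ) ^ (j+1) - (p:ℤ) ^ (k-1) * (p:ℤ) := by
    have a1 : (p:ℤ)^k * (p:ℤ)^j = (p:ℤ)^(k-1) * (p:ℤ)^(j+1) := by
      rw [← pow_add, ← pow_add]; congr 1; omega
    have a2 : (p:ℤ)^k = (p:ℤ)^(k-1) * (p:ℤ) := by
      rw [← pow_succ]; congr 1; omega
    calc (p:ℤ)^k * ((p:ℤ)^j - 1) = (p:ℤ)^k * (p:ℤ)^j - (p:ℤ)^k := by ring
    _ = (p:ℤ)^(k-1) * (p:ℤ)^(j+1) - (p:ℤ)^(k-1) * (p:ℤ) := by rw [a1, a2]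
  rw [e1] at I1 I2
  rw [e2] at I2
  exact key4 (p:ℤ) ((p:ℤ)^(j+1)) ((p:ℤ)^(k-1)) n (by exact_mod_cast hp3)
    (by exact_mod_cast hP) (one_le_pow₀ (by exact_mod_cast hp.one_le.trans (by omega)))
    (by exact_mod_cast hn)
    (by linarith [I1]) (by linarith [I2])
end

section
/- Let p be an odd prime, j ≥ 1 and k ≥ 1 integers. There do not exist a positive integer n and natural numbers m_1, …, m_n, w_1, …, w_n satisfying: Σ_h m_h = (p^k − 1)·2p^j, Σ_h w_h = p^k(p^j − 1), m_1 ≥ 2p^{j+1} − 2p^j, w_1 ≥ p^{j+1} − p + 1, m_h ≥ 2p^{j+1} − 1 and w_h ≥ p^{j+1} − p + 1 for 2 ≤ h ≤ n, together with (2p^{j+1} − 2p + 1)(2p^j + m_1 − 2) ≤ (4p^{j+1} − 4) w_1 and (2p^{j+1} − 2p + 1)(m_h − 1) ≤ (4p^{j+1} − 4) w_h for 2 ≤ h ≤ n. -/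
/-- Arithmetic impossibility showing `γ_{p^k−1}(μ_j)·τ_j` supports no nontrivial long
differential in the Greenlees spectral sequence computing `π_{*,*}(MHH(MZ/p)/τ^{p−1})`. -/
theorem stmt5 (p j k : ℕ) (hp : p.Prime) (hodd : Odd p) (hj : 1 ≤ j) (hk : 1 ≤ k) :
    ¬ ∃ (n : ℕ) (hn : 0 < n) (m w : Fin n → ℕ),
      (∑ h, m h = (p ^ k - 1) * (2 * p ^ j)) ∧
      (∑ h, w h = p ^ k * (p ^ j - 1)) ∧
      (2 * p ^ (j + 1) - 2 * p ^ j ≤ m ⟨0, hn⟩) ∧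
      (p ^ (j + 1) - p + 1 ≤ w ⟨0, hn⟩) ∧
      ((2 * p ^ (j + 1) - 2 * p + 1) * (2 * p ^ j + m ⟨0, hn⟩ - 2)
          ≤ (4 * p ^ (j + 1) - 4) * w ⟨0, hn⟩) ∧
      (∀ h : Fin n, h ≠ ⟨0, hn⟩ →
        2 * p ^ (j + 1) - 1 ≤ m h ∧
        p ^ (j + 1) - p + 1 ≤ w h ∧
        (2 * p ^ (j + 1) - 2 * p + 1) * (m h - 1) ≤ (4 * p ^ (j + 1) - 4) * w h) := by
  rintro ⟨n, hn, m, w, hsm, hsw, hm1, hw1, hineq1, hrest⟩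
  have hp3 : 3 ≤ p := by
    obtain ⟨t, ht⟩ := hodd
    have := hp.two_le
    omega
  set P := p ^ j with hP
  set Q := p ^ (j + 1) with hQ
  set R := p ^ k with hR
  have hQP : Q = p * P := by rw [hQ, hP, pow_succ, mul_comm]
  have hPp : p ≤ P := by
    calc p = p ^ 1 := (pow_one p).symm
    _ ≤ P := Nat.pow_le_pow_right (by omega) hj
  have hRp : p ≤ R := by
    calc p = p ^ 1 := (pow_one p).symm
    _ ≤ R := Nat.pow_le_pow_right (by omega) hk
  clear_value P Q R
  clear hP hQ hR
  have hPQ : 2 * P ≤ Q := by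
    rw [hQP]; exact Nat.mul_le_mul (by omega) le_rfl
  set z : Fin n := ⟨0, hn⟩ with hz
  set E : Finset (Fin n) := Finset.univ.erase z with hE
  have hcardE : E.card = n - 1 := by
    rw [hE, Finset.card_erase_of_mem (Finset.mem_univ z), Finset.card_univ, Fintype.card_fin]
  have hsplitm : m z + ∑ h ∈ E, m h = ∑ h, m h := Finset.add_sum_erase _ m (Finset.mem_univ z)
  have hsplitw : w z + ∑ h ∈ E, w h = ∑ h, w h := Finset.add_sum_erase _ w (Finset.mem_univ z)
  have F1 : (n - 1) * (2 * Q - 1) ≤ ∑ h ∈ E, m h := by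
    have := Finset.card_nsmul_le_sum E m (2 * Q - 1)
      (fun h hh => (hrest h (Finset.ne_of_mem_erase hh)).1)
    simpa [hcardE, smul_eq_mul] using this
  have F2 : (∑ h ∈ E, (m h - 1)) + (n - 1) = ∑ h ∈ E, m h := by
    calc (∑ h ∈ E, (m h - 1)) + (n - 1)
        = ∑ h ∈ E, ((m h - 1) + 1) := by
          rw [Finset.sum_add_distrib, Finset.sum_const, smul_eq_mul, mul_one, hcardE]
      _ = ∑ h ∈ E, m h := Finset.sum_congr rfl fun h hh => by
          have h1 := (hrest h (Finset.ne_of_mem_erase hh)).1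
          have hq : p ≤ Q := by
            rw [hQP]; exact Nat.le_mul_of_pos_right p (by omega)
          omega
  have F3 : (2 * Q - 2 * p + 1) * ((2 * P + m z - 2) + ∑ h ∈ E, (m h - 1))
      ≤ (4 * Q - 4) * (R * (P - 1)) := by
    calc (2 * Q - 2 * p + 1) * ((2 * P + m z - 2) + ∑ h ∈ E, (m h - 1))
        = (2 * Q - 2 * p + 1) * (2 * P + m z - 2) +
            ∑ h ∈ E, (2 * Q - 2 * p + 1) * (m h - 1) := by
          rw [Nat.mul_add, Finset.mul_sum]
      _ ≤ (4 * Q - 4) * w z + ∑ h ∈ E, (4 * Q - 4) * w h :=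
          add_le_add hineq1 (Finset.sum_le_sum fun h hh =>
            (hrest h (Finset.ne_of_mem_erase hh)).2.2)
      _ = (4 * Q - 4) * (w z + ∑ h ∈ E, w h) := by rw [Nat.mul_add, Finset.mul_sum]
      _ = (4 * Q - 4) * (R * (P - 1)) := by rw [hsplitw, hsw]
  have F4 : m z + ∑ h ∈ E, m h = (R - 1) * (2 * P) := by rw [hsplitm, hsm]
  have F5 : 2 * Q - 2 * P ≤ m z := hm1
  -- abstract the remaining data
  set a : ℕ := m z with ha
  set SE : ℕ := ∑ h ∈ E, m h with hSE
  set t : ℕ := ∑ h ∈ E, (m h - 1) with ht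
  clear_value a SE t
  clear_value z E
  clear hw1 hrest hz hineq1 ha hE hsplitw hsplitm hcardE ht hSE hsm hsw hm1 E z m w
  clear hp hodd hj hk
  -- side conditions for zify
  have c1 : 1 ≤ n := hn
  have c2 : 1 ≤ 2 * Q := by omega
  have c3 : 2 * p ≤ 2 * Q := by omega
  have c4 : (4:ℕ) ≤ 4 * Q := by omega
  have c5 : (2:ℕ) ≤ 2 * P + a := by omega
  have c6 : 1 ≤ P := by omega
  have c7 : 1 ≤ R := by omega
  have c8 : 2 * P ≤ 2 * Q := by omega
  zify [c1, c2, c3, c4, c5, c6, c7, c8] at F1 F2 F3 F4 F5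
  have hp3' : (3:ℤ) ≤ p := by exact_mod_cast hp3
  have hPp' : (p:ℤ) ≤ P := by exact_mod_cast hPp
  have hRp' : (p:ℤ) ≤ R := by exact_mod_cast hRp
  have hQP' : (Q:ℤ) = p * P := by exact_mod_cast hQP
  have hn' : (1:ℤ) ≤ n := by exact_mod_cast hn
  have hPQ' : 2 * (P:ℤ) ≤ Q := by exact_mod_cast hPQ
  -- key integer facts
  have e : 2 * (P:ℤ) + a - 2 + t = 2 * P * R - n - 1 := by linarith
  have G2 : (2 * (Q:ℤ) - 2 * p + 1) * (2 * P * R - n - 1) ≤ (4 * Q - 4) * (R * (P - 1)) := by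
    rw [← e]; exact F3
  have G1 : ((n:ℤ) - 1) * (2 * Q - 1) ≤ 2 * P * R - 2 * Q := by
    calc ((n:ℤ) - 1) * (2 * Q - 1) ≤ SE := F1
      _ ≤ 2 * P * R - 2 * Q := by linarith
  have step : (2 * (Q:ℤ) - 2) * (2 * P * R - 1) ≤ (2 * Q - 1) * (2 * P * R - n - 1) := by
    linarith [G1]
  have hQp : (p:ℤ) ≤ Q := by
    have h1P : (1:ℤ) ≤ P := by linarith
    have := mul_le_mul_of_nonneg_left h1P (show (0:ℤ) ≤ p by linarith)
    rw [hQP']; linarith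
  have hApos : (0:ℤ) ≤ 2 * Q - 2 * p + 1 := by linarith
  have hQ1pos : (0:ℤ) ≤ 2 * Q - 1 := by linarith
  have final : (2 * (Q:ℤ) - 2 * p + 1) * ((2 * Q - 2) * (2 * P * R - 1))
      ≤ (2 * Q - 1) * ((4 * Q - 4) * (R * (P - 1))) := by
    calc (2 * (Q:ℤ) - 2 * p + 1) * ((2 * Q - 2) * (2 * P * R - 1))
        ≤ (2 * (Q:ℤ) - 2 * p + 1) * ((2 * Q - 1) * (2 * P * R - n - 1)) :=
          mul_le_mul_of_nonneg_left step hApos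
      _ = (2 * Q - 1) * ((2 * (Q:ℤ) - 2 * p + 1) * (2 * P * R - n - 1)) := by ring
      _ ≤ (2 * Q - 1) * ((4 * Q - 4) * (R * (P - 1))) :=
          mul_le_mul_of_nonneg_left G2 hQ1pos
  have h2Q2 : (0:ℤ) < 2 * Q - 2 := by linarith
  have key : (2 * (Q:ℤ) - 2 * p + 1) * (2 * P * R - 1) ≤ 2 * R * (P - 1) * (2 * Q - 1) := by
    refine le_of_mul_le_mul_left ?_ h2Q2
    calc (2 * (Q:ℤ) - 2) * ((2 * (Q:ℤ) - 2 * p + 1) * (2 * P * R - 1))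
        = (2 * (Q:ℤ) - 2 * p + 1) * ((2 * Q - 2) * (2 * P * R - 1)) := by ring
      _ ≤ (2 * Q - 1) * ((4 * Q - 4) * (R * (P - 1))) := final
      _ = (2 * Q - 2) * (2 * R * (P - 1) * (2 * Q - 1)) := by ring
  rw [hQP'] at key
  linarith [key, mul_nonneg (show (0:ℤ) ≤ (R:ℤ) - p by linarith) (show (0:ℤ) ≤ 2 * (P:ℤ) by linarith),
    mul_pos (show (0:ℤ) < (R:ℤ) by linarith) (show (0:ℤ) < (P:ℤ) - 1 by linarith)]
end

section
/- Let i ≥ 1 and j ≥ 1 be integers. There do not exist a positive integer n and natural numbers k_1, …, k_n, w_1, …, w_n with: Σ_l k_l = 2^{i+j+1}, Σ_l w_l = 2^i(2^j − 1), k_l ≥ 2^{j+2} − 1 for all l, w_l ≥ 2^{j+1} − 1 for all l, and k_l − 1 ≤ w_l(2 + 1/(2^j − 1)) for all l. -/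
/-- Arithmetic contradiction used to prove `(γ_{2^{i−1}}(μ_j))^2 = 0` in
`π_{*,*}(MHH(MZ/2)/τ)`. -/
theorem stmt6 (i j : ℕ) (hi : 1 ≤ i) (hj : 1 ≤ j) :
    ¬ ∃ (n : ℕ) (_ : 1 ≤ n) (k w : Fin n → ℕ),
      (∑ l, k l = 2 ^ (i + j + 1)) ∧
      (∑ l, w l = 2 ^ i * (2 ^ j - 1)) ∧
      (∀ l, 2 ^ (j + 2) - 1 ≤ k l) ∧
      (∀ l, 2 ^ (j + 1) - 1 ≤ w l) ∧
      (∀ l, (k l : ℚ) - 1 ≤ (w l : ℚ) * (2 + 1 / ((2 : ℚ) ^ j - 1))) := by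
  rintro ⟨n, hn, k, w, hk, hw, hk2, hw2, h5⟩
  have h2j : (2:ℚ) ≤ (2:ℚ) ^ j := by
    calc (2:ℚ) = 2 ^ 1 := by norm_num
    _ ≤ 2 ^ j := by exact pow_le_pow_right₀ (by norm_num) hj
  have hpos : (0:ℚ) < (2:ℚ) ^ j - 1 := by linarith
  have hsum : (∑ l, ((k l : ℚ) - 1)) ≤ ∑ l, (w l : ℚ) * (2 + 1 / ((2:ℚ) ^ j - 1)) :=
    Finset.sum_le_sum (fun l _ => h5 l)
  rw [Finset.sum_sub_distrib, ← Finset.sum_mul] at hsum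
  have hkc : (∑ l, ((k l : ℚ))) = (2:ℚ) ^ (i + j + 1) := by
    exact_mod_cast congrArg (Nat.cast : ℕ → ℚ) hk
  have hwc : (∑ l, ((w l : ℚ))) = (2:ℚ) ^ i * ((2:ℚ) ^ j - 1) := by
    have h1 : (1:ℕ) ≤ 2 ^ j := Nat.one_le_two_pow
    have := congrArg (Nat.cast : ℕ → ℚ) hw
    push_cast [h1] at this
    simpa using this
  rw [hkc, hwc] at hsum
  simp only [Finset.sum_const, Finset.card_univ, Fintype.card_fin, nsmul_eq_mul, mul_one] at hsum
  -- derive n ≥ 2^i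
  have hrhs : (2:ℚ) ^ i * ((2:ℚ) ^ j - 1) * (2 + 1 / ((2:ℚ) ^ j - 1))
      = 2 ^ (i + j + 1) - 2 ^ i := by
    field_simp
    ring
  rw [hrhs] at hsum
  have hni : (2:ℚ) ^ i ≤ (n : ℚ) := by linarith
  have hn2 : 2 ^ i ≤ n := by exact_mod_cast hni
  -- lower bound on ∑ k
  have hlow : n * (2 ^ (j + 2) - 1) ≤ ∑ l, k l := by
    calc n * (2 ^ (j + 2) - 1) = ∑ _l : Fin n, (2 ^ (j + 2) - 1) := by
          simp [Finset.sum_const, mul_comm]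
      _ ≤ ∑ l, k l := Finset.sum_le_sum (fun l _ => hk2 l)
  rw [hk] at hlow
  have h1 : (1:ℕ) ≤ 2 ^ (j + 2) := Nat.one_le_two_pow
  have h2 : 2 ^ i * (2 ^ (j + 2) - 1) ≤ n * (2 ^ (j + 2) - 1) :=
    Nat.mul_le_mul_right _ hn2
  have e1 : 2 ^ i * 2 ^ (j + 2) = 2 * 2 ^ (i + j + 1) := by ring
  have e2 : 2 ^ i < 2 ^ (i + j + 1) := by
    exact Nat.pow_lt_pow_right (by norm_num) (by omega)
  have h3 : 2 ^ i * (2 ^ (j + 2) - 1) = 2 ^ i * 2 ^ (j + 2) - 2 ^ i :=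
    by rw [Nat.mul_sub_one] <;> omega
  omega
end

section
/- Let i ≥ 1 and j ≥ 1 be integers. There do not exist a positive integer n and natural numbers k_1, …, k_n, w_1, …, w_n with: Σ_l k_l = (2^i − 1)·2^{j+1}, Σ_l w_l = 2^i(2^j − 1), k_1 ≥ 2^{j+1} + 1, w_1 ≥ 2^{j+1} − 1, 2^{j+1} + k_1 − 2 ≤ w_1(2 + 1/(2^j − 1)), and for 2 ≤ l ≤ n: k_l ≥ 2^{j+2} − 1, w_l ≥ 2^{j+1} − 1, k_l − 1 ≤ w_l(2 + 1/(2^j − 1)). -/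
/-- Arithmetic impossibility showing `γ_{2^i−1}(μ_j)·τ_j` supports no nontrivial
differential in the motivic Greenlees spectral sequence for `MHH(MZ/2)/τ`. -/
theorem stmt7 (i j : ℕ) (hi : 1 ≤ i) (hj : 1 ≤ j) :
    ¬ ∃ (n : ℕ) (hn : 0 < n) (k w : Fin n → ℕ),
      (∑ l, k l = (2 ^ i - 1) * 2 ^ (j + 1)) ∧
      (∑ l, w l = 2 ^ i * (2 ^ j - 1)) ∧
      (2 ^ (j + 1) + 1 ≤ k ⟨0, hn⟩) ∧
      (2 ^ (j + 1) - 1 ≤ w ⟨0, hn⟩) ∧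
      ((2 : ℚ) ^ (j + 1) + (k ⟨0, hn⟩ : ℚ) - 2
          ≤ (w ⟨0, hn⟩ : ℚ) * (2 + 1 / ((2 : ℚ) ^ j - 1))) ∧
      (∀ l : Fin n, l ≠ ⟨0, hn⟩ →
        2 ^ (j + 2) - 1 ≤ k l ∧
        2 ^ (j + 1) - 1 ≤ w l ∧
        (k l : ℚ) - 1 ≤ (w l : ℚ) * (2 + 1 / ((2 : ℚ) ^ j - 1))) := by
  rintro ⟨n, hn, k, w, hk, hw, hk0, hw0, h0, hrest⟩
  set z : Fin n := ⟨0, hn⟩ with hz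
  set c : ℚ := 2 + 1 / ((2 : ℚ) ^ j - 1) with hc
  have hb2 : (2 : ℚ) ≤ (2 : ℚ) ^ j := by
    calc (2 : ℚ) = 2 ^ 1 := by norm_num
    _ ≤ 2 ^ j := by exact pow_le_pow_right₀ (by norm_num) hj
  have hbpos : (0 : ℚ) < (2 : ℚ) ^ j - 1 := by linarith
  -- split sums at z
  have ek : ∑ l, ((k l : ℚ) - 1)
      = ((k z : ℚ) - 1) + ∑ l ∈ Finset.univ.erase z, ((k l : ℚ) - 1) :=
    (Finset.add_sum_erase _ _ (Finset.mem_univ z)).symm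
  have ew : ∑ l, ((w l : ℚ) * c)
      = ((w z : ℚ) * c) + ∑ l ∈ Finset.univ.erase z, ((w l : ℚ) * c) :=
    (Finset.add_sum_erase _ _ (Finset.mem_univ z)).symm
  have hrest_sum : ∑ l ∈ Finset.univ.erase z, ((k l : ℚ) - 1)
      ≤ ∑ l ∈ Finset.univ.erase z, ((w l : ℚ) * c) :=
    Finset.sum_le_sum fun l hl => (hrest l (Finset.ne_of_mem_erase hl)).2.2
  have key : (2 : ℚ) ^ (j + 1) - 1 + ∑ l, ((k l : ℚ) - 1) ≤ ∑ l, ((w l : ℚ) * c) := by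
    rw [ek, ew]
    have : (2 : ℚ) ^ (j + 1) + (k z : ℚ) - 2 ≤ (w z : ℚ) * c := h0
    linarith
  -- evaluate the sums
  have skq : ∑ l, ((k l : ℚ) - 1) = ((2 : ℚ) ^ i - 1) * 2 ^ (j + 1) - n := by
    rw [Finset.sum_sub_distrib, Finset.sum_const, Finset.card_univ, Fintype.card_fin,
      nsmul_eq_mul, mul_one]
    have : ((∑ l, k l : ℕ) : ℚ) = ((2 : ℚ) ^ i - 1) * 2 ^ (j + 1) := by
      rw [hk, Nat.cast_mul, Nat.cast_sub Nat.one_le_two_pow]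
      push_cast
      ring
    rw [← this]
    push_cast
    ring
  have swq : ∑ l, ((w l : ℚ) * c) = (2 : ℚ) ^ i * (2 ^ (j + 1) - 1) := by
    rw [← Finset.sum_mul]
    have h1 : ∑ l, ((w l : ℚ)) = (2 : ℚ) ^ i * ((2 : ℚ) ^ j - 1) := by
      have : ((∑ l, w l : ℕ) : ℚ) = (2 : ℚ) ^ i * ((2 : ℚ) ^ j - 1) := by
        rw [hw, Nat.cast_mul, Nat.cast_sub Nat.one_le_two_pow]
        push_cast
        ring
      rw [← this]
      push_cast
      ring
    have h2 : ((2 : ℚ) ^ j - 1) * c = 2 ^ (j + 1) - 1 := by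
      rw [hc]
      field_simp
      ring
    rw [h1, mul_assoc, h2]
  -- deduce n ≥ 2^i - 1
  have hnq : (2 : ℚ) ^ i - 1 ≤ n := by
    rw [skq, swq] at key
    have e1 : (2 : ℚ) ^ (j + 1) = 2 * 2 ^ j := by ring
    nlinarith [key]
  have hnn : 2 ^ i - 1 ≤ n := by
    have : ((2 ^ i - 1 : ℕ) : ℚ) ≤ (n : ℚ) := by
      rw [Nat.cast_sub Nat.one_le_two_pow]
      push_cast
      linarith
    exact_mod_cast this
  -- natural-number lower bound on the k-sum
  have hklb : 2 ^ (j + 1) + 1 + (n - 1) * (2 ^ (j + 2) - 1) ≤ ∑ l, k l := by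
    rw [← Finset.add_sum_erase _ k (Finset.mem_univ z)]
    have hcard : (Finset.univ.erase z).card = n - 1 := by
      rw [Finset.card_erase_of_mem (Finset.mem_univ z), Finset.card_univ, Fintype.card_fin]
    have hs : (n - 1) * (2 ^ (j + 2) - 1) ≤ ∑ l ∈ Finset.univ.erase z, k l := by
      have := Finset.card_nsmul_le_sum (Finset.univ.erase z) k (2 ^ (j + 2) - 1)
        (fun l hl => (hrest l (Finset.ne_of_mem_erase hl)).1)
      rwa [hcard, smul_eq_mul] at this
    exact Nat.add_le_add hk0 hs
  rw [hk] at hklb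
  -- final contradiction
  have h2i : 2 ≤ 2 ^ i := Nat.one_lt_two_pow_iff.mpr (by omega)
  have h2j : 2 ≤ 2 ^ j := Nat.one_lt_two_pow_iff.mpr (by omega)
  have h2j2 : (1 : ℕ) ≤ 2 ^ (j + 2) := Nat.one_le_two_pow
  have hn1 : 1 ≤ n := hn
  zify [Nat.one_le_two_pow, hn1] at hklb hnn
  have e1 : (2 : ℤ) ^ (j + 1) = 2 * 2 ^ j := by ring
  have e2 : (2 : ℤ) ^ (j + 2) = 4 * 2 ^ j := by ring
  have h2i' : (2 : ℤ) ≤ 2 ^ i := by exact_mod_cast h2i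
  have h2j' : (2 : ℤ) ≤ 2 ^ j := by exact_mod_cast h2j
  nlinarith [mul_nonneg (by linarith : (0 : ℤ) ≤ (n : ℤ) - (2 ^ i - 1))
      (by nlinarith : (0 : ℤ) ≤ 4 * (2 : ℤ) ^ j - 1),
    mul_nonneg (by linarith : (0 : ℤ) ≤ (2 : ℤ) ^ i - 2)
      (by linarith : (0 : ℤ) ≤ 2 * (2 : ℤ) ^ j - 1)]
end

section
/- Let R be a commutative ring of characteristic 2 and let Γ = R[x_k : k ≥ 0]/⟨x_k^2 : k ≥ 0⟩. For f ≥ 1 with binary expansion f = Σ_k e_k 2^k (e_k ∈ {0,1}), define γ_f = Π_{k : e_k = 1} x_k, and γ_0 = 1. Let D : Γ → Γ ⊗ R be the R-linear derivation-like map determined by D(x_k) = γ_{2^k − 1} ⊗ t for a fixed element t, extended by the Leibniz rule D(ab) = D(a)b + aD(b). Then D(γ_f) = γ_{f−1} ⊗ t for every f ≥ 1. -/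
/-- In characteristic 2, the divided power `γ_f` is the product of the square-zero
generators `x_k` indexed by the binary digits of `f`. -/
noncomputable def gammaTwo {A : Type*} [CommRing A] (x : ℕ → A) (f : ℕ) : A :=
  ∏ k ∈ Finset.range f, if f.testBit k then x k else 1

lemma gamma_ext {A : Type*} [CommRing A] (x : ℕ → A) (f N : ℕ) (h : f ≤ N) :
    gammaTwo x f = ∏ k ∈ Finset.range N, if f.testBit k then x k else 1 := by
  unfold gammaTwo
  apply Finset.prod_subset (Finset.range_subset_range.2 h)
  intro k _ hk'
  simp only [Finset.mem_range, not_lt] at hk'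
  rw [Nat.testBit_lt_two_pow (lt_of_lt_of_le (Nat.lt_two_pow_self (n := f)) (Nat.pow_le_pow_right (by norm_num) hk'))]
  simp

lemma testBit_odd_succ (m k : ℕ) : (2*m+1).testBit (k+1) = m.testBit k := by
  rw [Nat.testBit_succ]; congr 1; omega

lemma testBit_even_succ (m k : ℕ) : (2*m).testBit (k+1) = m.testBit k := by
  rw [Nat.testBit_succ]; congr 1; omega

lemma gamma_odd {A : Type*} [CommRing A] (x : ℕ → A) (m : ℕ) :
    gammaTwo x (2*m+1) = x 0 * gammaTwo (fun k => x (k+1)) m := by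
  rw [gammaTwo, Finset.prod_range_succ']
  simp only [testBit_odd_succ]
  rw [gamma_ext (fun k => x (k+1)) m (2*m) (by omega)]
  have h0 : (2*m+1).testBit 0 = true := by simp [Nat.testBit_zero]
  rw [h0]
  simp [mul_comm]

lemma gamma_even {A : Type*} [CommRing A] (x : ℕ → A) (m : ℕ) :
    gammaTwo x (2*m) = gammaTwo (fun k => x (k+1)) m := by
  rcases Nat.eq_zero_or_pos m with rfl | hm
  · simp [gammaTwo]
  · have h2 : 2*m = (2*m-1)+1 := by omega
    have hrw : gammaTwo x (2*m)
        = ∏ k ∈ Finset.range ((2*m-1)+1), (if (2*m).testBit k then x k else 1) := by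
      rw [gammaTwo, ← h2]
    rw [hrw, Finset.prod_range_succ']
    simp only [testBit_even_succ]
    have h0 : (2*m).testBit 0 = false := by simp [Nat.testBit_zero]
    rw [gamma_ext (fun k => x (k+1)) m (2*m-1) (by omega), h0]
    simp

lemma x0_mul_gamma_odd {A : Type*} [CommRing A] (x : ℕ → A) (hx0 : x 0 ^ 2 = 0) (m : ℕ) :
    x 0 * gammaTwo x (2*m+1) = 0 := by
  rw [gamma_odd, ← mul_assoc, ← sq, hx0, zero_mul]

lemma aux (R A : Type*) [CommRing R] [CommRing A] [Algebra R A] (D : Derivation R A A) :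
    ∀ f, 1 ≤ f → ∀ (x : ℕ → A) (t : A), (∀ k, x k ^ 2 = 0) →
    (∀ k, D (x k) = gammaTwo x (2 ^ k - 1) * t) →
    D (gammaTwo x f) = gammaTwo x (f - 1) * t := by
  intro f
  induction f using Nat.strong_induction_on with
  | _ f ih =>
  intro hf x t hx hD
  rcases Nat.even_or_odd f with ⟨m, hm⟩ | ⟨m, hm⟩
  · -- f = 2m even, m ≥ 1
    have hm2 : f = 2*m := by omega
    have hm1 : 1 ≤ m := by omega
    subst hm2
    set y : ℕ → A := fun k => x (k+1) with hy
    have key : ∀ n, gammaTwo x (2*n+1) = x 0 * gammaTwo y n := fun n => gamma_odd x n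
    have hDy : ∀ k, D (y k) = gammaTwo y (2 ^ k - 1) * (x 0 * t) := by
      intro k
      have : (2:ℕ) ^ (k+1) - 1 = 2 * (2^k - 1) + 1 := by
        have := Nat.one_le_two_pow (n := k); omega
      rw [hy]
      simp only []
      rw [hD (k+1), this, key]
      ring
    have := ih m (by omega) hm1 y (x 0 * t) (fun k => hx (k+1)) hDy
    rw [gamma_even, this]
    have h1 : 2*m - 1 = 2*(m-1)+1 := by omega
    rw [h1, key]
    ring
  · -- f = 2m+1 odd
    have hm2 : f = 2*m+1 := by omega
    subst hm2
    rcases Nat.eq_zero_or_pos m with rfl | hm1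
    · -- f = 1
      have h1 : gammaTwo x 1 = x 0 := by simp [gammaTwo]
      have h2 := hD 0
      norm_num at h2 ⊢
      rw [h1, h2]
    · have hsplit : gammaTwo x (2*m+1) = x 0 * gammaTwo x (2*m) := by
        rw [gamma_odd, gamma_even]
      rw [hsplit, D.leibniz]
      have hD0 : D (x 0) = t := by
        have := hD 0; norm_num at this
        rwa [show gammaTwo x 0 = 1 by simp [gammaTwo], one_mul] at this
      have hIH := ih (2*m) (by omega) (by omega) x t hx hD
      rw [hD0, hIH, smul_eq_mul, smul_eq_mul]
      have h1 : 2*m - 1 = 2*(m-1)+1 := by omega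
      have : x 0 * gammaTwo x (2*m-1) = 0 := by
        rw [h1]; exact x0_mul_gamma_odd x (hx 0) (m-1)
      have hz : x 0 * (gammaTwo x (2*m-1) * t) = 0 := by
        rw [← mul_assoc, this, zero_mul]
      rw [hz, zero_add, Nat.add_sub_cancel]

/-- Divided-power Leibniz computation in characteristic 2: any derivation with
`D(x_k) = γ_{2^k−1}·t` satisfies `D(γ_f) = γ_{f−1}·t`. -/
theorem stmt9 (R A : Type*) [CommRing R] [CharP R 2] [CommRing A] [Algebra R A]
    (x : ℕ → A) (hx : ∀ k, x k ^ 2 = 0)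
    (D : Derivation R A A) (t : A)
    (hD : ∀ k, D (x k) = gammaTwo x (2 ^ k - 1) * t)
    (f : ℕ) (hf : 1 ≤ f) :
    D (gammaTwo x f) = gammaTwo x (f - 1) * t := by
  exact aux R A D f hf x t hx hD
end
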